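/- Let G = [[0, √β Aᵀ],[−√β A, βM]] with A nonsingular and M symmetric positive definite. Every real eigenvalue μ of G is nonnegative; moreover if z = (x,y) is an eigenvector with Gz = μz and μ = 0 then z = 0, i.e., 0 is not an eigenvalue and all real eigenvalues are strictly positive. -/

import Mathlib

open Matrix

theorem stmt_11 (d : ℕ) (A M : Matrix (Fin d) (Fin d) ℝ)
    (hA : IsUnit A) (hMsymm : M.IsSymm) (hMpd : M.PosDef)
    (β : ℝ) (hβ : 0 < β)
    (G : Matrix (Fin d ⊕ Fin d) (Fin d ⊕ Fin d) ℝ)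
    (hG : G = Matrix.fromBlocks (0 : Matrix (Fin d) (Fin d) ℝ)
      (Real.sqrt β • Aᵀ) (-(Real.sqrt β) • A) (β • M)) :
    (∀ z : Fin d ⊕ Fin d → ℝ, G.mulVec z = 0 → z = 0) ∧
    (∀ (μ : ℝ) (z : Fin d ⊕ Fin d → ℝ), z ≠ 0 → G.mulVec z = μ • z → 0 < μ) := by
  have hs : (0:ℝ) < Real.sqrt β := Real.sqrt_pos.mpr hβ
  have hinjA : Function.Injective (A.mulVec) := mulVec_injective_iff_isUnit.mpr hA
  have hinjAT : Function.Injective (Aᵀ.mulVec) :=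
    mulVec_injective_iff_isUnit.mpr ((isUnit_transpose A).mpr hA)
  have key : ∀ z : Fin d ⊕ Fin d → ℝ, G.mulVec z = 0 → z = 0 := by
    intro z hz
    set x := z ∘ Sum.inl with hx
    set y := z ∘ Sum.inr with hy
    rw [hG, fromBlocks_mulVec] at hz
    have h1 : Real.sqrt β • (Aᵀ *ᵥ y) = 0 := by
      funext i
      simpa [smul_mulVec] using congrFun hz (Sum.inl i)
    have hy0 : y = 0 := by
      apply hinjAT
      have hATy : Aᵀ *ᵥ y = 0 := by
        rcases smul_eq_zero.mp h1 with h | h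
        · exact absurd h hs.ne'
        · exact h
      simpa using hATy
    have h2 : -(Real.sqrt β) • (A *ᵥ x) = 0 := by
      funext i
      have := congrFun hz (Sum.inr i)
      simp only [Sum.elim_inr, Pi.add_apply, Pi.zero_apply, smul_mulVec] at this ⊢
      have hy0' : M *ᵥ y = 0 := by rw [hy0]; simp
      simpa [smul_mulVec, ← hx, ← hy, hy0'] using this
    have hx0 : x = 0 := by
      apply hinjA
      have hAx : A *ᵥ x = 0 := by
        rcases smul_eq_zero.mp h2 with h | h
        · exact absurd h (neg_ne_zero.mpr hs.ne')
        · exact h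
      simpa using hAx
    funext i
    cases i with
    | inl i => exact congrFun hx0 i
    | inr i => exact congrFun hy0 i
  refine ⟨key, ?_⟩
  intro μ z hzne hz
  have hz0 := hz
  set x := z ∘ Sum.inl with hx
  set y := z ∘ Sum.inr with hy
  rw [hG, fromBlocks_mulVec] at hz
  have h1 : Real.sqrt β • (Aᵀ *ᵥ y) = μ • x := by
    funext i
    have := congrFun hz (Sum.inl i)
    simp [smul_mulVec, ← hx, ← hy] at this
    exact this
  have h2 : -(Real.sqrt β) • (A *ᵥ x) + β • (M *ᵥ y) = μ • y := by
    funext i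
    have := congrFun hz (Sum.inr i)
    simp [smul_mulVec, neg_smul, Matrix.neg_mulVec, ← hx, ← hy] at this ⊢
    exact this
  have hdot : μ * (x ⬝ᵥ x + y ⬝ᵥ y) = β * (y ⬝ᵥ (M *ᵥ y)) := by
    have e1 : x ⬝ᵥ (μ • x) = x ⬝ᵥ (Real.sqrt β • (Aᵀ *ᵥ y)) := by rw [h1]
    have e2 : y ⬝ᵥ (μ • y) = y ⬝ᵥ (-(Real.sqrt β) • (A *ᵥ x) + β • (M *ᵥ y)) := by rw [h2]
    have hsym : x ⬝ᵥ Aᵀ *ᵥ y = y ⬝ᵥ A *ᵥ x := by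
      rw [dotProduct_mulVec, vecMul_transpose, dotProduct_comm, dotProduct_mulVec]
    rw [dotProduct_smul, smul_eq_mul, dotProduct_smul, smul_eq_mul, hsym] at e1
    rw [dotProduct_add, dotProduct_smul, dotProduct_smul, dotProduct_smul,
      smul_eq_mul, smul_eq_mul, smul_eq_mul] at e2
    nlinarith [e1, e2]
  by_cases hy0 : y = 0
  · exfalso
    have hx0 : x ≠ 0 := by
      intro hx0
      apply hzne
      funext i
      cases i with
      | inl i => exact congrFun hx0 i
      | inr i => exact congrFun hy0 i
    have hxx : 0 < x ⬝ᵥ x := by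
      rcases lt_or_eq_of_le (Finset.sum_nonneg fun i _ => mul_self_nonneg (x i)) with h | h
      · exact h
      · exact absurd (dotProduct_self_eq_zero.mp h.symm) hx0
    have hμx : μ * (x ⬝ᵥ x) = 0 := by
      have := hdot
      rw [hy0] at this
      simpa using this
    have hμ0 : μ = 0 := by
      rcases mul_eq_zero.mp hμx with h | h
      · exact h
      · exact absurd h hxx.ne'
    have hGz : G *ᵥ z = 0 := by rw [hz0, hμ0, zero_smul]
    exact hzne (key z hGz)
  · have hMy : 0 < y ⬝ᵥ (M *ᵥ y) := by
      have := hMpd.dotProduct_mulVec_pos hy0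
      simpa using this
    have hzz : 0 < x ⬝ᵥ x + y ⬝ᵥ y := by
      have hyy : 0 < y ⬝ᵥ y := by
        rcases lt_or_eq_of_le (Finset.sum_nonneg fun i _ => mul_self_nonneg (y i)) with h | h
        · exact h
        · exact absurd (dotProduct_self_eq_zero.mp h.symm) hy0
      have hxx : 0 ≤ x ⬝ᵥ x := Finset.sum_nonneg fun i _ => mul_self_nonneg (x i)
      linarith
    have hpos : 0 < μ * (x ⬝ᵥ x + y ⬝ᵥ y) := hdot ▸ mul_pos hβ hMy
    by_contra h
    push_neg at h
    nlinarith [hpos, hzz]
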